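/- Let 1 < α < 2, κ > 0, and let γ > 0 satisfy γ = ∫_{[−1,1]\{0}} (e^{−γu} − 1 + γu)·κ·|u|^{-(1+α)} du. Define G : ℝ → ℝ by G(ς) = e^{−γς} for ς > 0 and G(ς) = 1 for ς ≤ 0. Then: (i) G(ς) = 1 for all ς ≤ 0; (ii) G(ς) → 0 as ς → ∞; (iii) G(x) = 1 − F(x) for all x ∈ ℝ, where F(ξ) = 1 − e^{−γξ} for ξ > 0 and F(ξ) = 0 for ξ ≤ 0; (iv) for every ς > 1, G is differentiable at ς, the function u ↦ (G(ς+u) − G(ς) − G'(ς)u)·κ·|u|^{-(1+α)} is Lebesgue integrable on [−1,1] \ {0}, and G'(ς) + ∫_{[−1,1]\{0}} (G(ς+u) − G(ς) − G'(ς)u)·κ·|u|^{-(1+α)} du = 0. -/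

import Mathlib

open MeasureTheory

/-- For `x ≤ 0`, `e^x - 1 - x ≤ x^2/2`. -/
lemma exp_quad_bound_nonpos {x : ℝ} (hx : x ≤ 0) :
    Real.exp x - 1 - x ≤ x ^ 2 / 2 := by
  set k : ℝ → ℝ := fun x => x ^ 2 / 2 - Real.exp x + 1 + x with hk
  have hd : ∀ y : ℝ, HasDerivAt k (y - Real.exp y + 1) y := by
    intro y
    have h := (((hasDerivAt_pow 2 y).div_const 2).sub (Real.hasDerivAt_exp y)).add_const 1
    have h2 := h.add (hasDerivAt_id y)
    exact h2.congr_deriv (by simp)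
  have hanti : AntitoneOn k (Set.Iic 0) := by
    apply antitoneOn_of_deriv_nonpos (convex_Iic 0)
    · exact Continuous.continuousOn (by fun_prop)
    · intro y _
      exact (hd y).differentiableAt.differentiableWithinAt
    · intro y _
      rw [(hd y).deriv]
      have := Real.add_one_le_exp y
      linarith
  have h0 : k 0 ≤ k x := hanti (Set.mem_Iic.mpr hx) Set.self_mem_Iic hx
  have : k 0 = 0 := by simp [hk]
  rw [this] at h0
  simp only [hk] at h0
  linarith

/-- For `0 ≤ x`, `e^x - 1 - x ≤ (x^2/2) e^x`. -/
lemma exp_quad_bound_nonneg {x : ℝ} (hx : 0 ≤ x) :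
    Real.exp x - 1 - x ≤ x ^ 2 / 2 * Real.exp x := by
  set h : ℝ → ℝ := fun x => x ^ 2 / 2 - 1 + (1 + x) * Real.exp (-x) with hh
  have hexp : ∀ y : ℝ, HasDerivAt (fun x : ℝ => Real.exp (-x)) (-Real.exp (-y)) y := by
    intro y
    have := (Real.hasDerivAt_exp (-y)).comp y (hasDerivAt_neg y)
    exact this.congr_deriv (by simp)
  have hd : ∀ y : ℝ, HasDerivAt h (y - y * Real.exp (-y)) y := by
    intro y
    have h1 : HasDerivAt (fun x : ℝ => (1 + x) * Real.exp (-x))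
        (1 * Real.exp (-y) + (1 + y) * (-Real.exp (-y))) y :=
      HasDerivAt.mul ((hasDerivAt_id y).const_add 1) (hexp y)
    have h2 := (((hasDerivAt_pow 2 y).div_const 2).sub_const 1).add h1
    exact h2.congr_deriv (by simp; ring)
  have hmono : MonotoneOn h (Set.Ici 0) := by
    apply monotoneOn_of_deriv_nonneg (convex_Ici 0)
    · apply Continuous.continuousOn
      fun_prop
    · intro y _
      exact (hd y).differentiableAt.differentiableWithinAt
    · intro y hy
      rw [interior_Ici] at hy
      rw [(hd y).deriv]
      have h1 : Real.exp (-y) ≤ 1 := Real.exp_le_one_iff.mpr (by linarith [(Set.mem_Ioi.mp hy).le])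
      nlinarith [(Set.mem_Ioi.mp hy).le]
  have h0 : h 0 ≤ h x := hmono Set.self_mem_Ici (Set.mem_Ici.mpr hx) hx
  have hz : h 0 = 0 := by simp [hh]
  rw [hz] at h0
  simp only [hh] at h0
  have hen : Real.exp (-x) = (Real.exp x)⁻¹ := Real.exp_neg x
  rw [hen] at h0
  have hp : 0 < Real.exp x := Real.exp_pos x
  have hmul : (Real.exp x)⁻¹ * Real.exp x = 1 := inv_mul_cancel₀ (ne_of_gt hp)
  nlinarith [h0, hp, hmul]

/-- Global quadratic bound: `|e^x - 1 - x| ≤ (x^2/2) e^{|x|}`. -/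
lemma abs_exp_quad_bound (x : ℝ) :
    |Real.exp x - 1 - x| ≤ x ^ 2 / 2 * Real.exp |x| := by
  have h0 : 0 ≤ Real.exp x - 1 - x := by
    have := Real.add_one_le_exp x; linarith
  rw [abs_of_nonneg h0]
  rcases le_total x 0 with hx | hx
  · have h1 := exp_quad_bound_nonpos hx
    have h2 : (1 : ℝ) ≤ Real.exp |x| := Real.one_le_exp (abs_nonneg x)
    nlinarith [sq_nonneg x]
  · rw [abs_of_nonneg hx]
    exact exp_quad_bound_nonneg hx

/-- Integrability of the layer-equation integrand. -/
lemma key_integrable (α κ γ : ℝ) (hα1 : 1 < α) (hα2 : α < 2) (hκ : 0 < κ) (hγ : 0 < γ) :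
    IntegrableOn (fun u => (Real.exp (-γ * u) - 1 + γ * u) * (κ * |u| ^ (-(1 + α))))
      (Set.Icc (-1 : ℝ) 1 \ {0}) volume := by
  have h1α : (-1 : ℝ) < 1 - α := by linarith
  have I0 : IntervalIntegrable (fun x : ℝ => x ^ (1 - α)) volume 0 1 :=
    intervalIntegral.intervalIntegrable_rpow' h1α
  have I1 : IntervalIntegrable (fun x : ℝ => |x| ^ (1 - α)) volume 0 1 := by
    rw [intervalIntegrable_iff_integrableOn_Ioc_of_le zero_le_one] at I0 ⊢
    exact I0.congr_fun (fun x hx => by rw [abs_of_pos hx.1]) measurableSet_Ioc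
  have I2 : IntervalIntegrable (fun x : ℝ => |x| ^ (1 - α)) volume (-1) 0 := by
    have h := (IntervalIntegrable.iff_comp_neg (f := fun x : ℝ => |x| ^ (1 - α))).mp I1
    simp only [abs_neg, neg_zero] at h
    exact h.symm
  have I3 : IntervalIntegrable (fun x : ℝ => |x| ^ (1 - α)) volume (-1) 1 := I2.trans I1
  have I4 : IntegrableOn (fun x : ℝ => |x| ^ (1 - α)) (Set.Icc (-1 : ℝ) 1) volume := by
    rwa [intervalIntegrable_iff_integrableOn_Icc_of_le (by norm_num)] at I3
  set C : ℝ := γ ^ 2 / 2 * Real.exp γ * κ with hC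
  have I5 : IntegrableOn (fun x : ℝ => C * |x| ^ (1 - α))
      (Set.Icc (-1 : ℝ) 1 \ {0}) volume :=
    (I4.mono_set Set.diff_subset).const_mul C
  have hmeas : MeasurableSet (Set.Icc (-1 : ℝ) 1 \ {0}) :=
    measurableSet_Icc.diff (measurableSet_singleton 0)
  apply Integrable.mono' I5
  · apply Measurable.aestronglyMeasurable
    fun_prop
  · filter_upwards [ae_restrict_mem hmeas] with u hu
    have hu0 : u ≠ 0 := by
      intro h; exact hu.2 (by simp [h])
    have habs : 0 < |u| := abs_pos.mpr hu0
    have hu1 : |u| ≤ 1 := abs_le.mpr ⟨hu.1.1, hu.1.2⟩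
    have hb2 : 0 ≤ κ * |u| ^ (-(1 + α)) := by positivity
    have hb1 : |Real.exp (-γ * u) - 1 + γ * u| ≤ γ ^ 2 * u ^ 2 / 2 * Real.exp γ := by
      have h := abs_exp_quad_bound (-γ * u)
      have he : Real.exp (-γ * u) - 1 - (-γ * u) = Real.exp (-γ * u) - 1 + γ * u := by ring
      rw [he] at h
      have habs2 : |(-γ * u)| = γ * |u| := by
        rw [abs_mul, abs_neg, abs_of_pos hγ]
      rw [habs2] at h
      have hle : Real.exp (γ * |u|) ≤ Real.exp γ := by
        apply Real.exp_le_exp.mpr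
        nlinarith
      calc |Real.exp (-γ * u) - 1 + γ * u|
          ≤ (-γ * u) ^ 2 / 2 * Real.exp (γ * |u|) := h
        _ ≤ (-γ * u) ^ 2 / 2 * Real.exp γ := by
            apply mul_le_mul_of_nonneg_left hle (by positivity)
        _ = γ ^ 2 * u ^ 2 / 2 * Real.exp γ := by ring
    have key : u ^ 2 * |u| ^ (-(1 + α)) = |u| ^ (1 - α) := by
      have h1 : u ^ 2 = |u| ^ ((2 : ℕ) : ℝ) := by
        rw [Real.rpow_natCast, sq_abs]
      rw [h1, ← Real.rpow_add habs]
      norm_num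
      ring_nf
    calc ‖(Real.exp (-γ * u) - 1 + γ * u) * (κ * |u| ^ (-(1 + α)))‖
        = |Real.exp (-γ * u) - 1 + γ * u| * (κ * |u| ^ (-(1 + α))) := by
          rw [Real.norm_eq_abs, abs_mul, abs_of_nonneg hb2]
      _ ≤ γ ^ 2 * u ^ 2 / 2 * Real.exp γ * (κ * |u| ^ (-(1 + α))) :=
          mul_le_mul_of_nonneg_right hb1 hb2
      _ = C * (u ^ 2 * |u| ^ (-(1 + α))) := by rw [hC]; ring
      _ = C * |u| ^ (1 - α) := by rw [key]

/-- The boundary layer function `G(ς) = e^{-γς}` (for `ς > 0`, `G = 1` for `ς ≤ 0`)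
satisfies the boundary condition, the matching condition, equals `1 - F`, and (for
`ς > 1`) solves the layer equation with the truncated Lévy measure. -/
theorem boundary_layer_right (α κ γ : ℝ) (hα1 : 1 < α) (hα2 : α < 2) (hκ : 0 < κ)
    (hγ : 0 < γ)
    (hγeq : γ = ∫ u in (Set.Icc (-1 : ℝ) 1 \ {0}),
      (Real.exp (-γ * u) - 1 + γ * u) * (κ * |u| ^ (-(1 + α)))) :
    let G : ℝ → ℝ := fun ς => if 0 < ς then Real.exp (-γ * ς) else 1
    let F : ℝ → ℝ := fun ξ => if 0 < ξ then 1 - Real.exp (-γ * ξ) else 0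
    (∀ ς : ℝ, ς ≤ 0 → G ς = 1) ∧
    Filter.Tendsto G Filter.atTop (nhds 0) ∧
    (∀ x : ℝ, G x = 1 - F x) ∧
    ∀ ς : ℝ, 1 < ς →
      DifferentiableAt ℝ G ς ∧
      Integrable (fun u => (G (ς + u) - G ς - deriv G ς * u) * (κ * |u| ^ (-(1 + α))))
        ((volume : Measure ℝ).restrict (Set.Icc (-1 : ℝ) 1 \ {0})) ∧
      deriv G ς + ∫ u in (Set.Icc (-1 : ℝ) 1 \ {0}),
        (G (ς + u) - G ς - deriv G ς * u) * (κ * |u| ^ (-(1 + α))) = 0 := by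
  intro G F
  have hmeas : MeasurableSet (Set.Icc (-1 : ℝ) 1 \ {0}) :=
    measurableSet_Icc.diff (measurableSet_singleton 0)
  refine ⟨?_, ?_, ?_, ?_⟩
  · intro ς hς
    simp only [G]
    rw [if_neg (not_lt.mpr hς)]
  · have h1 : Filter.Tendsto (fun ς : ℝ => Real.exp (-γ * ς)) Filter.atTop (nhds 0) := by
      have h2 : Filter.Tendsto (fun ς : ℝ => -γ * ς) Filter.atTop Filter.atBot := by
        apply Filter.Tendsto.const_mul_atTop_of_neg (neg_neg_iff_pos.mpr hγ) Filter.tendsto_id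
      exact Real.tendsto_exp_atBot.comp h2
    apply h1.congr'
    filter_upwards [Filter.eventually_gt_atTop (0 : ℝ)] with ς hς
    simp only [G]
    rw [if_pos hς]
  · intro x
    simp only [G, F]
    by_cases hx : 0 < x <;> simp [hx]
  · intro ς hς
    have hς0 : 0 < ς := lt_trans one_pos hς
    have hder0 : HasDerivAt (fun t => Real.exp (-γ * t)) (-γ * Real.exp (-γ * ς)) ς := by
      have h := (Real.hasDerivAt_exp (-γ * ς)).comp ς ((hasDerivAt_id ς).const_mul (-γ))
      exact h.congr_deriv (by simp [mul_comm])
    have hEq : (fun t => Real.exp (-γ * t)) =ᶠ[nhds ς] G := by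
      filter_upwards [Ioi_mem_nhds hς0] with t ht
      simp only [G]
      rw [if_pos (Set.mem_Ioi.mp ht)]
    have hder : HasDerivAt G (-γ * Real.exp (-γ * ς)) ς := hder0.congr_of_eventuallyEq hEq.symm
    have hG' : deriv G ς = -γ * Real.exp (-γ * ς) := hder.deriv
    have hGς : G ς = Real.exp (-γ * ς) := by
      simp only [G]; rw [if_pos hς0]
    have hpt : ∀ u ∈ Set.Icc (-1 : ℝ) 1 \ {0},
        (G (ς + u) - G ς - deriv G ς * u) * (κ * |u| ^ (-(1 + α)))
          = Real.exp (-γ * ς) * ((Real.exp (-γ * u) - 1 + γ * u) * (κ * |u| ^ (-(1 + α)))) := by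
      intro u hu
      have hu1 : -1 ≤ u := hu.1.1
      have hpos : 0 < ς + u := by linarith
      have hGsu : G (ς + u) = Real.exp (-γ * ς) * Real.exp (-γ * u) := by
        simp only [G]
        rw [if_pos hpos, ← Real.exp_add]
        ring_nf
      rw [hGsu, hGς, hG']
      ring
    have hInt0 := key_integrable α κ γ hα1 hα2 hκ hγ
    have hInt1 : Integrable
        (fun u => Real.exp (-γ * ς) *
          ((Real.exp (-γ * u) - 1 + γ * u) * (κ * |u| ^ (-(1 + α)))))
        ((volume : Measure ℝ).restrict (Set.Icc (-1 : ℝ) 1 \ {0})) :=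
      hInt0.const_mul _
    have hae : (fun u => (G (ς + u) - G ς - deriv G ς * u) * (κ * |u| ^ (-(1 + α))))
        =ᵐ[(volume : Measure ℝ).restrict (Set.Icc (-1 : ℝ) 1 \ {0})]
        (fun u => Real.exp (-γ * ς) *
          ((Real.exp (-γ * u) - 1 + γ * u) * (κ * |u| ^ (-(1 + α))))) := by
      filter_upwards [ae_restrict_mem hmeas] with u hu
      exact hpt u hu
    refine ⟨hder.differentiableAt, hInt1.congr hae.symm, ?_⟩
    rw [setIntegral_congr_fun hmeas hpt, MeasureTheory.integral_const_mul, ← hγeq, hG']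
    ring
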